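/- arXiv:2411.07761 — 4 statements merged into one kernel-verified Lean document; each statement's English description precedes it below -/
import Mathlib

section
/- Let f belong to the class S with Taylor coefficients a_n = f⁽ⁿ⁾(0)/n!, and let g be analytic and injective on the open unit disc 𝔻 with g(0) = 0, g'(0) = 1, g odd (g(−z) = −g(z) for z ∈ 𝔻), and g(z)² = f(z²) for all z ∈ 𝔻; write c_{2k−1} = g⁽²ᵏ⁻¹⁾(0)/(2k−1)! for the odd Taylor coefficients of g (so c₁ = 1). Then for every n ≥ 1, |a_n| ≤ Σ_{k=1}^{n} |c_{2k−1}|². In particular, if the Robertson bound Σ_{k=1}^{n} |c_{2k−1}|² ≤ n holds, then |a_n| ≤ n. -/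
open Metric Finset

private lemma aux_coeff {f : ℂ → ℂ} {p : FormalMultilinearSeries ℂ ℂ ℂ} {r : ENNReal}
    (h : HasFPowerSeriesOnBall f p 0 r) (n : ℕ) :
    p.coeff n = iteratedDeriv n f 0 / (n.factorial : ℂ) := by
  have h2 : (n.factorial : ℂ) • p.coeff n = iteratedDeriv n f 0 := by
    rw [iteratedDeriv_eq_iteratedFDeriv, ← h.factorial_smul (1 : ℂ) n,
      Nat.cast_smul_eq_nsmul]
    rfl
  rw [eq_div_iff (by exact_mod_cast n.factorial_ne_zero : (n.factorial:ℂ) ≠ 0), mul_comm, ← smul_eq_mul]; exact h2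

private lemma aux_key {f g : ℂ → ℂ} {pf pg : FormalMultilinearSeries ℂ ℂ ℂ}
    (hp : HasFPowerSeriesOnBall f pf 0 ((1/2 : NNReal) : ENNReal))
    (hq : HasFPowerSeriesOnBall g pg 0 ((1/2 : NNReal) : ENNReal))
    (hsq : ∀ z ∈ ball (0 : ℂ) 1, (g z) ^ 2 = f (z ^ 2)) (m : ℕ) :
    (∑ kl ∈ Finset.HasAntidiagonal.antidiagonal m, pg.coeff kl.1 * pg.coeff kl.2)
      = (if Even m then pf.coeff (m / 2) else 0) := by
  set C := pg.coeff with hC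
  set A := pf.coeff with hA
  set e : ℕ → ℂ := fun m =>
    (∑ kl ∈ Finset.HasAntidiagonal.antidiagonal m, C kl.1 * C kl.2) - (if Even m then A (m / 2) else 0) with he
  suffices hz : HasFPowerSeriesAt (0 : ℂ → ℂ) (FormalMultilinearSeries.ofScalars ℂ e) 0 by
    have h0 := hz.eq_zero
    have : e m = 0 := by
      have h1 := congrArg (fun P : FormalMultilinearSeries ℂ ℂ ℂ => P.coeff m) h0
      simpa [FormalMultilinearSeries.coeff, FormalMultilinearSeries.ofScalars,
        List.prod_ofFn] using h1
    exact sub_eq_zero.mp this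
  rw [hasFPowerSeriesAt_iff]
  have h2 : ∀ᶠ z in nhds (0 : ℂ), ‖z‖ < 1 / 4 := by
    filter_upwards [Metric.ball_mem_nhds (0 : ℂ) (by norm_num : (0:ℝ) < 1/4)] with z hz
    simpa [Metric.mem_ball] using hz
  filter_upwards [h2] with z hz
  have hz1 : ‖z‖ < 1 := by linarith
  have hzhalf : (‖z‖₊ : ENNReal) < ((1/2 : NNReal) : ENNReal) := by
    rw [ENNReal.coe_lt_coe, ← NNReal.coe_lt_coe, coe_nnnorm, NNReal.coe_div]
    push_cast
    linarith
  have hzball : z ∈ eball (0 : ℂ) ((1/2 : NNReal) : ENNReal) := by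
    rw [mem_emetric_ball_zero_iff]
    exact hzhalf
  have hz2ball : z ^ 2 ∈ eball (0 : ℂ) ((1/2 : NNReal) : ENNReal) := by
    rw [mem_emetric_ball_zero_iff, enorm_eq_nnnorm, ENNReal.coe_lt_coe, ← NNReal.coe_lt_coe, coe_nnnorm,
      NNReal.coe_div, norm_pow]
    push_cast
    nlinarith [norm_nonneg z]
  -- summability of the series of g at z
  have hrad : (‖z‖₊ : ENNReal) < pg.radius := lt_of_lt_of_le hzhalf hq.r_le
  have hsumnorm : Summable fun n => ‖z ^ n • C n‖ := by
    have := pg.summable_norm_mul_pow hrad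
    refine this.congr fun n => ?_
    rw [norm_smul, norm_pow, FormalMultilinearSeries.norm_apply_eq_norm_coef, mul_comm]
    simp [← hC]
  -- HasSum for g at z
  have hgz : HasSum (fun n => z ^ n • C n) (g z) := by
    have := hq.hasSum hzball
    simpa [FormalMultilinearSeries.apply_eq_pow_smul_coeff] using this
  -- Cauchy product : HasSum for g z ^ 2
  have hDsum : HasSum (fun n => z ^ n • ((∑ kl ∈ Finset.HasAntidiagonal.antidiagonal n, C kl.1 * C kl.2)))
      ((g z) ^ 2) := by
    have hsummable : Summable fun n =>
        ∑ kl ∈ Finset.HasAntidiagonal.antidiagonal n, (z ^ kl.1 • C kl.1) * (z ^ kl.2 • C kl.2) :=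
      (summable_norm_sum_mul_antidiagonal_of_summable_norm hsumnorm hsumnorm).of_norm
    have htsum := tsum_mul_tsum_eq_tsum_sum_antidiagonal_of_summable_norm hsumnorm hsumnorm
    have hval : ∑' n, ∑ kl ∈ Finset.HasAntidiagonal.antidiagonal n, (z ^ kl.1 • C kl.1) * (z ^ kl.2 • C kl.2)
        = (g z) ^ 2 := by
      rw [← htsum, hgz.tsum_eq, sq]
    have := hval ▸ hsummable.hasSum
    refine this.congr_fun fun n => ?_
    rw [Finset.smul_sum]
    refine Finset.sum_congr rfl fun kl hkl => ?_
    have hkl' : kl.1 + kl.2 = n := Finset.HasAntidiagonal.mem_antidiagonal.mp hkl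
    simp only [smul_eq_mul]
    rw [← hkl', pow_add]
    ring
  -- HasSum for f (z^2)
  have hfz : HasSum (fun k => (z ^ 2) ^ k • A k) (f (z ^ 2)) := by
    have := hp.hasSum hz2ball
    simpa [FormalMultilinearSeries.apply_eq_pow_smul_coeff] using this
  have hbsum : HasSum (fun n => z ^ n • (if Even n then A (n / 2) else 0)) (f (z ^ 2)) := by
    have hinj : Function.Injective (fun k : ℕ => 2 * k) := fun a b hab => by simpa using hab
    have hvan : ∀ x ∉ Set.range (fun k : ℕ => 2 * k),
        z ^ x • (if Even x then A (x / 2) else 0) = (0 : ℂ) := by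
      intro x hx
      have : ¬ Even x := by
        rintro ⟨r, rfl⟩
        exact hx ⟨r, by ring⟩
      rw [if_neg this, smul_zero]
    refine (hinj.hasSum_iff hvan).mp ?_
    refine hfz.congr_fun fun k => ?_
    simp only [Function.comp]
    rw [if_pos ⟨k, by ring⟩, Nat.mul_div_cancel_left _ (by norm_num : 0 < 2), ← pow_mul]
  -- combine
  have hcomb := hDsum.sub hbsum
  rw [hsq z (by simpa [Metric.mem_ball] using hz1), sub_self] at hcomb
  have hcoeff : ∀ k, (FormalMultilinearSeries.ofScalars ℂ e).coeff k = e k := by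
    intro k
    simp [FormalMultilinearSeries.coeff, FormalMultilinearSeries.ofScalars, List.prod_ofFn]
  refine hcomb.congr_fun fun k => ?_
  rw [hcoeff k, he]
  simp only [smul_sub]

/-- **Robertson's conjecture implies Bieberbach's conjecture.** If `g` is the odd square-root
transform of `f ∈ S`, with odd coefficients `c (2k-1)`, then `|a n| ≤ ∑_{k=1}^n |c (2k-1)|²`;
in particular the Robertson bound `∑_{k=1}^n |c (2k-1)|² ≤ n` implies `|a n| ≤ n`. -/
theorem robertson_implies_bieberbach (f g : ℂ → ℂ)
    (hf : DifferentiableOn ℂ f (ball (0 : ℂ) 1))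
    (hfinj : Set.InjOn f (ball (0 : ℂ) 1))
    (hf0 : f 0 = 0) (hf1 : deriv f 0 = 1)
    (hg : DifferentiableOn ℂ g (ball (0 : ℂ) 1))
    (hginj : Set.InjOn g (ball (0 : ℂ) 1))
    (hg0 : g 0 = 0) (hg1 : deriv g 0 = 1)
    (hodd : ∀ z ∈ ball (0 : ℂ) 1, g (-z) = -g z)
    (hsq : ∀ z ∈ ball (0 : ℂ) 1, (g z) ^ 2 = f (z ^ 2))
    (a c : ℕ → ℂ)
    (ha : ∀ n, a n = iteratedDeriv n f 0 / (n.factorial : ℂ))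
    (hc : ∀ m, c m = iteratedDeriv m g 0 / (m.factorial : ℂ)) :
    ∀ n : ℕ, 1 ≤ n →
      ‖a n‖ ≤ ∑ k ∈ Finset.Icc 1 n, ‖c (2 * k - 1)‖ ^ 2 ∧
      ((∑ k ∈ Finset.Icc 1 n, ‖c (2 * k - 1)‖ ^ 2 ≤ (n : ℝ)) → ‖a n‖ ≤ (n : ℝ)) := by
  -- power series of f and g
  have hsub : closedBall (0 : ℂ) (((1/2 : NNReal) : ℝ)) ⊆ ball (0 : ℂ) 1 := by
    intro x hx
    simp only [mem_closedBall, mem_ball, dist_zero_right] at *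
    push_cast at hx
    linarith
  have hf' : DifferentiableOn ℂ f (closedBall (0 : ℂ) ((1/2 : NNReal) : ℝ)) := hf.mono hsub
  have hg' : DifferentiableOn ℂ g (closedBall (0 : ℂ) ((1/2 : NNReal) : ℝ)) := hg.mono hsub
  have hp : HasFPowerSeriesOnBall f (cauchyPowerSeries f 0 (1/2 : NNReal)) 0
      ((1/2 : NNReal) : ENNReal) :=
    hf'.hasFPowerSeriesOnBall (by norm_num : (0 : NNReal) < 1/2)
  have hq : HasFPowerSeriesOnBall g (cauchyPowerSeries g 0 (1/2 : NNReal)) 0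
      ((1/2 : NNReal) : ENNReal) :=
    hg'.hasFPowerSeriesOnBall (by norm_num : (0 : NNReal) < 1/2)
  set pf := cauchyPowerSeries f 0 (1/2 : NNReal)
  set pg := cauchyPowerSeries g 0 (1/2 : NNReal)
  have haA : ∀ n, a n = pf.coeff n := fun n => by rw [ha n, aux_coeff hp]
  have hcC : ∀ m, c m = pg.coeff m := fun m => by rw [hc m, aux_coeff hq]
  -- even coefficients of g vanish
  have heven : ∀ m, Even m → c m = 0 := by
    intro m hm
    have hEq : (fun z => g (-z)) =ᶠ[nhds (0 : ℂ)] fun z => -g z := by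
      filter_upwards [Metric.ball_mem_nhds (0 : ℂ) one_pos] with z hz
      exact hodd z hz
    have h1 := hEq.iteratedDeriv_eq m
    rw [iteratedDeriv_comp_neg, iteratedDeriv_fun_neg, neg_zero, hm.neg_one_pow, one_smul] at h1
    have : iteratedDeriv m g 0 = 0 := by linear_combination h1 / 2
    rw [hc m, this, zero_div]
  -- key convolution identity
  have hkey := aux_key hp hq hsq
  intro n hn
  -- express a n as a convolution sum over Icc 1 n
  have han : a n = ∑ k ∈ Finset.Icc 1 n, c (2 * k - 1) * c (2 * (n - k) + 1) := by
    have h2n := hkey (2 * n)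
    rw [if_pos ⟨n, by ring⟩, Nat.mul_div_cancel_left _ (by norm_num : 0 < 2)] at h2n
    rw [haA n, ← h2n]
    rw [Finset.Nat.sum_antidiagonal_eq_sum_range_succ_mk]
    have hfilter : ∑ i ∈ (Finset.range (2 * n + 1)).filter (fun i => ¬ Even i),
        pg.coeff i * pg.coeff (2 * n - i)
        = ∑ i ∈ Finset.range (2 * n + 1), pg.coeff i * pg.coeff (2 * n - i) := by
      refine Finset.sum_filter_of_ne fun x hx hne => ?_
      intro hxeven
      apply hne
      rw [← hcC x] at *
      rw [heven x hxeven, zero_mul]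
    rw [← hfilter]
    refine Finset.sum_nbij' (fun x => (x + 1) / 2) (fun k => 2 * k - 1) ?_ ?_ ?_ ?_ ?_
    · intro x hx
      simp only [Finset.mem_filter, Finset.mem_range, Nat.not_even_iff] at hx
      simp only [Finset.mem_Icc]
      omega
    · intro k hk
      simp only [Finset.mem_Icc] at hk
      simp only [Finset.mem_filter, Finset.mem_range, Nat.not_even_iff]
      omega
    · intro x hx
      simp only [Finset.mem_filter, Finset.mem_range, Nat.not_even_iff] at hx
      show 2 * ((x + 1) / 2) - 1 = x
      omega
    · intro k hk
      simp only [Finset.mem_Icc] at hk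
      show (2 * k - 1 + 1) / 2 = k
      omega
    · intro x hx
      simp only [Finset.mem_filter, Finset.mem_range, Nat.not_even_iff] at hx
      have h1 : 2 * ((x + 1) / 2) - 1 = x := by omega
      have h2 : 2 * (n - (x + 1) / 2) + 1 = 2 * n - x := by omega
      rw [hcC, hcC, h1, h2]
  -- Cauchy-Schwarz bound
  set F : ℕ → ℝ := fun k => ‖c (2 * k - 1)‖ with hF
  set G : ℕ → ℝ := fun k => ‖c (2 * (n - k) + 1)‖ with hG
  have hbound : ‖a n‖ ≤ ∑ k ∈ Finset.Icc 1 n, F k * G k := by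
    rw [han]
    refine le_trans (norm_sum_le _ _) ?_
    refine Finset.sum_le_sum fun k hk => ?_
    rw [norm_mul]
  have hGF : ∑ k ∈ Finset.Icc 1 n, G k ^ 2 = ∑ k ∈ Finset.Icc 1 n, F k ^ 2 := by
    refine Finset.sum_nbij' (fun k => n + 1 - k) (fun k => n + 1 - k) ?_ ?_ ?_ ?_ ?_
    · intro k hk; simp only [Finset.mem_Icc] at *; omega
    · intro k hk; simp only [Finset.mem_Icc] at *; omega
    · intro k hk; simp only [Finset.mem_Icc] at hk; show n + 1 - (n + 1 - k) = k; omega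
    · intro k hk; simp only [Finset.mem_Icc] at hk; show n + 1 - (n + 1 - k) = k; omega
    · intro k hk
      simp only [Finset.mem_Icc] at hk
      have : 2 * (n + 1 - k) - 1 = 2 * (n - k) + 1 := by omega
      rw [hF, hG]
      simp only
      rw [this]
  have hCS := Finset.sum_mul_sq_le_sq_mul_sq (Finset.Icc 1 n) F G
  rw [hGF] at hCS
  have hFnonneg : (0:ℝ) ≤ ∑ k ∈ Finset.Icc 1 n, F k ^ 2 :=
    Finset.sum_nonneg fun k _ => sq_nonneg _
  have hFGnonneg : (0:ℝ) ≤ ∑ k ∈ Finset.Icc 1 n, F k * G k :=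
    Finset.sum_nonneg fun k _ => mul_nonneg (norm_nonneg _) (norm_nonneg _)
  have hmain : ‖a n‖ ≤ ∑ k ∈ Finset.Icc 1 n, ‖c (2 * k - 1)‖ ^ 2 := by
    refine le_trans hbound ?_
    nlinarith
  exact ⟨hmain, fun hrob => le_trans hmain hrob⟩
end

section
/- Let α : ℕ → ℂ (indexed from 1) and define β : ℕ → ℂ recursively by β₀ = 1 and n·β_n = Σ_{k=0}^{n−1} (n−k)·α_{n−k}·β_k for n ≥ 1 (these are the Taylor coefficients of ψ = exp(φ) when φ(z) = Σ_{k≥1} α_k z^k and ψ(z) = Σ_{k≥0} β_k z^k). Then for every n ≥ 1, Σ_{k=0}^{n} |β_k|² ≤ (n+1)·exp( (1/(n+1)) · Σ_{m=1}^{n} Σ_{k=1}^{m} ( k·|α_k|² − 1/k ) ). -/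
open Finset

private lemma reindex_lemma (g : ℕ → ℝ) (n : ℕ) :
    ∑ k ∈ range n, g (n - k) = ∑ j ∈ Icc 1 n, g j := by
  rw [show Icc 1 n = Ico 1 (n+1) by rfl, Finset.sum_Ico_eq_sum_range]
  simp only [Nat.add_sub_cancel]
  rw [← Finset.sum_range_reflect]
  exact Finset.sum_congr rfl fun k hk => by
    simp only [mem_range] at hk; congr 1; omega

private lemma cs_step (α β : ℕ → ℂ) (n : ℕ)
    (h : (n : ℂ) * β n = ∑ k ∈ range n, ((n - k : ℕ) : ℂ) * α (n - k) * β k) :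
    (n : ℝ)^2 * ‖β n‖^2 ≤
      (∑ j ∈ Icc 1 n, (j : ℝ)^2 * ‖α j‖^2) * ∑ k ∈ range n, ‖β k‖^2 := by
  have h1 : (n : ℝ) * ‖β n‖ ≤ ∑ k ∈ range n, ‖((n - k : ℕ) : ℂ) * α (n - k)‖ * ‖β k‖ := by
    have hh := norm_sum_le (range n) (fun k => ((n - k : ℕ) : ℂ) * α (n - k) * β k)
    rw [← h] at hh
    calc (n : ℝ) * ‖β n‖ = ‖(n : ℂ) * β n‖ := by rw [norm_mul, Complex.norm_natCast]
      _ ≤ _ := hh.trans (Finset.sum_le_sum fun k _ => by rw [norm_mul])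
  have h2 : ((n : ℝ) * ‖β n‖)^2 ≤
      (∑ k ∈ range n, ‖((n - k : ℕ) : ℂ) * α (n - k)‖ * ‖β k‖)^2 :=
    pow_le_pow_left₀ (by positivity) h1 2
  have h3 := Finset.sum_mul_sq_le_sq_mul_sq (range n)
      (fun k => ‖((n - k : ℕ) : ℂ) * α (n - k)‖) (fun k => ‖β k‖)
  have h4 : ∑ k ∈ range n, ‖((n - k : ℕ) : ℂ) * α (n - k)‖^2
      = ∑ j ∈ Icc 1 n, (j : ℝ)^2 * ‖α j‖^2 := by
    rw [← reindex_lemma (fun j => (j : ℝ)^2 * ‖α j‖^2) n]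
    exact Finset.sum_congr rfl fun k _ => by
      rw [norm_mul, Complex.norm_natCast, mul_pow]
  calc (n : ℝ)^2 * ‖β n‖^2 = ((n : ℝ) * ‖β n‖)^2 := by ring
    _ ≤ _ := h2.trans (h4 ▸ h3)

private lemma sumA (u : ℕ → ℝ) (n : ℕ) :
    ∑ m ∈ Icc 1 n, ∑ k ∈ Icc 1 m, u k = ∑ k ∈ Icc 1 n, ((n : ℝ) + 1 - k) * u k := by
  induction n with
  | zero => simp
  | succ n ih =>
    have h : (1:ℕ) ≤ n + 1 := by omega
    rw [Finset.sum_Icc_succ_top h, ih]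
    conv_rhs => rw [Finset.sum_Icc_succ_top h]
    rw [Finset.sum_Icc_succ_top h]
    push_cast
    rw [← add_assoc, ← Finset.sum_add_distrib]
    congr 1
    · exact Finset.sum_congr rfl fun k _ => by ring
    · ring

private lemma sumB (t : ℕ → ℝ) (n : ℕ) :
    ∑ m ∈ Icc 1 n, (∑ k ∈ Icc 1 m, t k) * (1 / ((m : ℝ) * (m + 1)))
      = ∑ k ∈ Icc 1 n, t k * (1 / (k : ℝ) - 1 / ((n : ℝ) + 1)) := by
  induction n with
  | zero => simp
  | succ n ih =>
    have h : (1:ℕ) ≤ n + 1 := by omega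
    rw [Finset.sum_Icc_succ_top h, ih, Finset.sum_Icc_succ_top h]
    conv_rhs => rw [Finset.sum_Icc_succ_top h]
    rw [add_mul, Finset.sum_mul]
    push_cast
    rw [← add_assoc, ← Finset.sum_add_distrib]
    have h1 : ((n:ℝ)+1) ≠ 0 := by positivity
    have h2 : ((n:ℝ)+1+1) ≠ 0 := by positivity
    congr 1
    · apply Finset.sum_congr rfl
      intro k hk
      have hk0 : ((k:ℝ)) ≠ 0 := by
        have := (mem_Icc.mp hk).1
        positivity
      field_simp
      ring
    · field_simp
      ring

private lemma main_bound (α β : ℕ → ℂ) (hβ0 : β 0 = 1)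
    (hrec : ∀ n : ℕ, 1 ≤ n → (n : ℂ) * β n =
      ∑ k ∈ Finset.range n, ((n - k : ℕ) : ℂ) * α (n - k) * β k) :
    ∀ n : ℕ, ∑ k ∈ range (n+1), ‖β k‖^2 ≤
      ((n:ℝ)+1) * Real.exp (∑ m ∈ Icc 1 n,
        ((∑ j ∈ Icc 1 m, (j:ℝ)^2 * ‖α j‖^2) - m) * (1/((m:ℝ)*((m:ℝ)+1)))) := by
  intro n
  induction n with
  | zero => simp [hβ0, Real.exp_zero]
  | succ n ih =>
    have hcs := cs_step α β (n+1) (hrec (n+1) (by omega))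
    set A := ∑ j ∈ Icc 1 (n+1), (j:ℝ)^2 * ‖α j‖^2 with hA
    set B := ∑ k ∈ range (n+1), ‖β k‖^2 with hB
    set E := ∑ m ∈ Icc 1 n,
        ((∑ j ∈ Icc 1 m, (j:ℝ)^2 * ‖α j‖^2) - m) * (1/((m:ℝ)*((m:ℝ)+1))) with hE
    have hAnn : 0 ≤ A := by rw [hA]; positivity
    have hBnn : 0 ≤ B := by rw [hB]; positivity
    have hN1 : (0:ℝ) < (n:ℝ)+1 := by positivity
    have hN2 : (0:ℝ) < (n:ℝ)+2 := by positivity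
    have hβN : ((n:ℝ)+1)^2 * ‖β (n+1)‖^2 ≤ A * B := by
      push_cast at hcs; exact hcs
    have hEtop : ∑ m ∈ Icc 1 (n+1),
        ((∑ j ∈ Icc 1 m, (j:ℝ)^2 * ‖α j‖^2) - m) * (1/((m:ℝ)*((m:ℝ)+1)))
        = E + (A - ((n:ℝ)+1)) * (1/(((n:ℝ)+1)*((n:ℝ)+2))) := by
      rw [Finset.sum_Icc_succ_top (by omega : (1:ℕ) ≤ n+1)]
      push_cast
      rw [← hA]
      ring
    rw [Finset.sum_range_succ, hEtop]
    -- key numeric inequality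
    set x : ℝ := (((n:ℝ)+1)^2 + A) / (((n:ℝ)+1)*((n:ℝ)+2)) with hx
    have hxe : x ≤ Real.exp (x - 1) := by
      have := Real.add_one_le_exp (x - 1)
      linarith
    have hx1 : x - 1 = (A - ((n:ℝ)+1)) * (1/(((n:ℝ)+1)*((n:ℝ)+2))) := by
      rw [hx]; field_simp; ring
    have hβN' : ‖β (n+1)‖^2 ≤ A * B / ((n:ℝ)+1)^2 := by
      rw [le_div_iff₀ (by positivity)]
      calc ‖β (n+1)‖^2 * ((n:ℝ)+1)^2 = ((n:ℝ)+1)^2 * ‖β (n+1)‖^2 := by ring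
        _ ≤ A * B := hβN
    have step1 : B + ‖β (n+1)‖^2 ≤ B * (((n:ℝ)+2) * x / ((n:ℝ)+1)) := by
      have : B * (((n:ℝ)+2) * x / ((n:ℝ)+1)) = B + A * B / ((n:ℝ)+1)^2 := by
        rw [hx]; field_simp
      rw [this]
      linarith
    have step2 : B * (((n:ℝ)+2) * x / ((n:ℝ)+1))
        ≤ ((n:ℝ)+1) * Real.exp E * (((n:ℝ)+2) * x / ((n:ℝ)+1)) := by
      apply mul_le_mul_of_nonneg_right ih
      have hx0 : 0 ≤ x := by rw [hx]; positivity
      positivity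
    have step3 : ((n:ℝ)+1) * Real.exp E * (((n:ℝ)+2) * x / ((n:ℝ)+1))
        = ((n:ℝ)+2) * (Real.exp E * x) := by
      field_simp
    have step4 : Real.exp E * x ≤ Real.exp (E + (A - ((n:ℝ)+1)) * (1/(((n:ℝ)+1)*((n:ℝ)+2)))) := by
      rw [Real.exp_add, ← hx1]
      exact mul_le_mul_of_nonneg_left hxe (Real.exp_pos E).le
    calc B + ‖β (n+1)‖^2 ≤ ((n:ℝ)+1) * Real.exp E * (((n:ℝ)+2) * x / ((n:ℝ)+1)) :=
          step1.trans step2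
      _ = ((n:ℝ)+2) * (Real.exp E * x) := step3
      _ ≤ ((n:ℝ)+2) * Real.exp (E + (A - ((n:ℝ)+1)) * (1/(((n:ℝ)+1)*((n:ℝ)+2)))) := by
          apply mul_le_mul_of_nonneg_left step4 (by positivity)
      _ = ((((n:ℕ)+1 : ℕ) : ℝ)+1) * Real.exp (E + (A - ((n:ℝ)+1)) * (1/(((n:ℝ)+1)*((n:ℝ)+2)))) := by
          push_cast
          ring



/-- **The Lebedev–Milin inequality.** If `β₀ = 1` and `n βₙ = ∑_{k<n} (n-k) α_{n-k} β_k`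
(the coefficient recursion for `ψ = exp φ`), then for every `n ≥ 1`,
`∑_{k=0}^n |β_k|² ≤ (n+1) exp( (1/(n+1)) ∑_{m=1}^n ∑_{k=1}^m (k|α_k|² - 1/k) )`. -/
theorem lebedev_milin_inequality (α β : ℕ → ℂ)
    (hβ0 : β 0 = 1)
    (hrec : ∀ n : ℕ, 1 ≤ n → (n : ℂ) * β n =
      ∑ k ∈ Finset.range n, ((n - k : ℕ) : ℂ) * α (n - k) * β k) :
    ∀ n : ℕ, 1 ≤ n →
      ∑ k ∈ Finset.range (n + 1), ‖β k‖ ^ 2 ≤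
        ((n : ℝ) + 1) * Real.exp ((1 / ((n : ℝ) + 1)) *
          ∑ m ∈ Finset.Icc 1 n, ∑ k ∈ Finset.Icc 1 m,
            ((k : ℝ) * ‖α k‖ ^ 2 - 1 / (k : ℝ))) := by
  intro n hn
  have hmb := main_bound α β hβ0 hrec n
  have hexp : (1 / ((n : ℝ) + 1)) *
      ∑ m ∈ Icc 1 n, ∑ k ∈ Icc 1 m, ((k : ℝ) * ‖α k‖ ^ 2 - 1 / (k : ℝ))
      = ∑ m ∈ Icc 1 n,
        ((∑ j ∈ Icc 1 m, (j:ℝ)^2 * ‖α j‖^2) - m) * (1/((m:ℝ)*((m:ℝ)+1))) := by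
    rw [sumA (fun k => (k:ℝ) * ‖α k‖^2 - 1/(k:ℝ)) n]
    have hE : ∑ m ∈ Icc 1 n,
        ((∑ j ∈ Icc 1 m, (j:ℝ)^2 * ‖α j‖^2) - m) * (1/((m:ℝ)*((m:ℝ)+1)))
        = ∑ m ∈ Icc 1 n,
          (∑ k ∈ Icc 1 m, ((k:ℝ)^2 * ‖α k‖^2 - 1)) * (1/((m:ℝ)*((m:ℝ)+1))) := by
      apply Finset.sum_congr rfl
      intro m _
      congr 1
      rw [Finset.sum_sub_distrib, Finset.sum_const, Nat.card_Icc]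
      simp
    rw [hE, sumB (fun k => (k:ℝ)^2 * ‖α k‖^2 - 1) n, Finset.mul_sum]
    apply Finset.sum_congr rfl
    intro k hk
    have hk1 := (mem_Icc.mp hk).1
    have hk0 : ((k:ℝ)) ≠ 0 := by positivity
    have hn0 : ((n:ℝ)+1) ≠ 0 := by positivity
    field_simp
  rw [hexp]
  exact hmb
end

section
/- Let 0 ≤ s ≤ t be real numbers and let φ be analytic on the open unit disc 𝔻 with φ(0) = 0, |φ(z)| ≤ |z| for all z ∈ 𝔻, and φ'(0) = e^{s−t}. Then for every z ∈ 𝔻, |z − φ(z)| ≤ 2|z| · (1+|z|)/(1−|z|) · (1 − e^{s−t}). -/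
open Metric

/-- For `0 ≤ s ≤ t` and a Schwarz function `φ` with `φ'(0) = e^{s-t}`,
`|z - φ z| ≤ 2|z| (1+|z|)/(1-|z|) (1 - e^{s-t})` on the unit disc. -/
theorem schwarz_transition_estimate (s t : ℝ) (hs : 0 ≤ s) (hst : s ≤ t)
    (φ : ℂ → ℂ)
    (hφ : DifferentiableOn ℂ φ (ball (0 : ℂ) 1))
    (hφ0 : φ 0 = 0)
    (hφle : ∀ z ∈ ball (0 : ℂ) 1, ‖φ z‖ ≤ ‖z‖)
    (hφ' : deriv φ 0 = (Real.exp (s - t) : ℂ)) :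
    ∀ z ∈ ball (0 : ℂ) 1,
      ‖z - φ z‖ ≤ 2 * ‖z‖ * ((1 + ‖z‖) / (1 - ‖z‖)) * (1 - Real.exp (s - t)) := by
  intro z hz
  set a : ℝ := Real.exp (s - t) with ha_def
  have ha0 : 0 < a := Real.exp_pos _
  have ha1 : a ≤ 1 := Real.exp_le_one_iff.mpr (by linarith)
  have h0mem : (0 : ℂ) ∈ ball (0 : ℂ) 1 := mem_ball_self one_pos
  have hznorm : ‖z‖ < 1 := by simpa using hz
  -- h = dslope φ 0 : the Schwarz quotient
  set h : ℂ → ℂ := dslope φ 0 with hh_def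
  have hhdiff : DifferentiableOn ℂ h (ball (0 : ℂ) 1) :=
    (Complex.differentiableOn_dslope (isOpen_ball.mem_nhds h0mem)).mpr hφ
  have hh0 : h 0 = (a : ℂ) := by rw [hh_def, dslope_same, hφ']
  have hhval : ∀ w : ℂ, w ≠ 0 → h w = φ w / w := by
    intro w hw
    rw [hh_def, dslope_of_ne _ hw, slope_def_field]
    simp [hφ0]
  have hhle : ∀ w ∈ ball (0 : ℂ) 1, ‖h w‖ ≤ 1 := by
    intro w hw
    rcases eq_or_ne w 0 with rfl | hw0
    · rw [hh0, Complex.norm_real, Real.norm_of_nonneg ha0.le]; exact ha1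
    · rw [hhval w hw0, norm_div]
      have hwpos : (0 : ℝ) < ‖w‖ := norm_pos_iff.mpr hw0
      rw [div_le_one hwpos]
      exact hφle w hw
  rcases eq_or_lt_of_le ha1 with ha1' | ha1'
  · -- a = 1 : h attains max modulus 1 at 0, so h ≡ 1 and φ z = z
    have hmax : IsMaxOn (norm ∘ h) (ball (0 : ℂ) 1) 0 := by
      intro w hw
      simp only [Function.comp_apply, Set.mem_setOf_eq, hh0]
      rw [Complex.norm_real, Real.norm_of_nonneg ha0.le, ha1']
      exact hhle w hw
    have heq := Complex.eqOn_of_isPreconnected_of_isMaxOn_norm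
      (convex_ball (0 : ℂ) 1).isPreconnected isOpen_ball hhdiff h0mem hmax
    have hφz : φ z = z := by
      rcases eq_or_ne z 0 with rfl | hz0
      · simpa using hφ0
      · have h1 := heq hz
        simp only [Function.const_apply, hh0] at h1
        rw [hhval z hz0, ha1'] at h1
        field_simp at h1
        simpa using h1
    rw [hφz, sub_self, norm_zero, ← ha1']
    simp
  · -- a < 1
    have hden : ∀ w ∈ ball (0 : ℂ) 1, (1 - a) ≤ ‖1 - (a : ℂ) * h w‖ := by
      intro w hw
      have h1 : ‖(a : ℂ) * h w‖ ≤ a := by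
        rw [norm_mul, Complex.norm_real, Real.norm_of_nonneg ha0.le]
        nlinarith [hhle w hw, hhle w hw]
      calc (1 : ℝ) - a = ‖(1 : ℂ)‖ - a := by simp
        _ ≤ ‖(1 : ℂ)‖ - ‖(a : ℂ) * h w‖ := by linarith
        _ ≤ ‖(1 : ℂ) - (a : ℂ) * h w‖ := norm_sub_norm_le _ _ |>.trans_eq' (by ring_nf)
    have hdenne : ∀ w ∈ ball (0 : ℂ) 1, (1 : ℂ) - (a : ℂ) * h w ≠ 0 := by
      intro w hw hcontra
      have := hden w hw
      rw [hcontra, norm_zero] at this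
      linarith
    set g : ℂ → ℂ := fun w => (h w - a) / (1 - (a : ℂ) * h w) with hg_def
    have hgdiff : DifferentiableOn ℂ g (ball (0 : ℂ) 1) := by
      apply DifferentiableOn.div
      · exact hhdiff.sub_const _
      · exact (differentiableOn_const _).sub ((differentiableOn_const _).mul hhdiff)
      · exact hdenne
    have hg0 : g 0 = 0 := by
      rw [hg_def]; simp [hh0]
    have hgle : ∀ w ∈ ball (0 : ℂ) 1, ‖g w‖ ≤ 1 := by
      intro w hw
      rw [hg_def]
      simp only
      rw [norm_div, div_le_one (lt_of_lt_of_le (by linarith) (hden w hw))]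
      -- |h w - a|² ≤ |1 - a h w|²
      have hsq : ‖h w - (a : ℂ)‖ ^ 2 ≤ ‖(1 : ℂ) - (a : ℂ) * h w‖ ^ 2 := by
        have e1 : ‖h w - (a : ℂ)‖ ^ 2 = Complex.normSq (h w) - 2 * a * (h w).re + a ^ 2 := by
          rw [Complex.sq_norm]
          simp [Complex.normSq_apply, Complex.sub_re, Complex.sub_im]
          ring
        have e2 : ‖(1 : ℂ) - (a : ℂ) * h w‖ ^ 2
            = 1 - 2 * a * (h w).re + a ^ 2 * Complex.normSq (h w) := by
          rw [Complex.sq_norm]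
          simp [Complex.normSq_apply, Complex.sub_re, Complex.sub_im, Complex.mul_re,
            Complex.mul_im]
          ring
        have hns : Complex.normSq (h w) ≤ 1 := by
          rw [Complex.normSq_eq_norm_sq]
          nlinarith [hhle w hw, norm_nonneg (h w)]
        have key2 : 0 ≤ (1 - a ^ 2) * (1 - Complex.normSq (h w)) :=
          mul_nonneg (by nlinarith) (by linarith)
        rw [e1, e2]
        nlinarith
      nlinarith [norm_nonneg (h w - (a : ℂ)), norm_nonneg ((1 : ℂ) - (a : ℂ) * h w)]
    -- Schwarz lemma for g : ‖g z‖ ≤ ‖z‖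
    have hgz : ‖g z‖ ≤ ‖z‖ := by
      by_contra hcon
      push_neg at hcon
      set ε : ℝ := (‖g z‖ - ‖z‖) / (2 * ‖g z‖) with hε_def
      have hgzpos : 0 < ‖g z‖ := lt_of_le_of_lt (norm_nonneg z) hcon
      have hε0 : 0 < ε := div_pos (by linarith) (by positivity)
      have hε1 : ε < 1 := by
        rw [hε_def, div_lt_one (by positivity)]
        nlinarith [norm_nonneg z]
      have hmap : Set.MapsTo (fun w => ((1 - ε : ℝ) : ℂ) * g w) (ball (0 : ℂ) 1)
          (ball (0 : ℂ) 1) := by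
        intro w hw
        rw [mem_ball_zero_iff, norm_mul, Complex.norm_real,
          Real.norm_of_nonneg (by linarith)]
        nlinarith [hgle w hw, norm_nonneg (g w)]
      have hdiff' : DifferentiableOn ℂ (fun w => ((1 - ε : ℝ) : ℂ) * g w) (ball (0 : ℂ) 1) :=
        (differentiableOn_const _).mul hgdiff
      have h0' : ((1 - ε : ℝ) : ℂ) * g 0 = 0 := by rw [hg0, mul_zero]
      have := Complex.norm_le_norm_of_mapsTo_ball hdiff' (hmap.mono_right ball_subset_closedBall) h0'
        hznorm
      simp only [norm_mul, Complex.norm_real, Real.norm_of_nonneg (by linarith : (0:ℝ) ≤ 1 - ε)] at this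
      have harith : ∀ G Z : ℝ, 0 < G → (1 - (G - Z) / (2 * G)) * G = (G + Z) / 2 := by
        intro G Z hG; field_simp; ring
      simp only [hε_def] at this
      rw [harith _ _ hgzpos] at this
      linarith
    -- now unroll: ‖h z - a‖ ≤ ‖z‖ ‖1 - a h z‖
    have key : ‖h z - (a : ℂ)‖ ≤ ‖z‖ * ‖(1 : ℂ) - (a : ℂ) * h z‖ := by
      have := hgz
      rw [hg_def] at this
      simp only [norm_div] at this
      have hdpos : 0 < ‖(1:ℂ) - (a:ℂ) * h z‖ := lt_of_lt_of_le (by linarith) (hden z hz)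
      rw [div_le_iff₀ hdpos] at this
      linarith [this]
    -- ‖1 - a h z‖ ≤ ‖1 - h z‖ + (1 - a)
    have tri : ‖(1 : ℂ) - (a : ℂ) * h z‖ ≤ ‖(1 : ℂ) - h z‖ + (1 - a) := by
      have : (1 : ℂ) - (a : ℂ) * h z = (1 - h z) + (1 - (a:ℂ)) * h z := by ring
      rw [this]
      refine (norm_add_le _ _).trans ?_
      gcongr
      rw [norm_mul]
      have h1a : ‖(1 : ℂ) - (a : ℂ)‖ = 1 - a := by
        rw [show (1:ℂ) - (a:ℂ) = ((1 - a : ℝ) : ℂ) by push_cast; ring,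
          Complex.norm_real, Real.norm_of_nonneg (by linarith)]
      rw [h1a]
      nlinarith [hhle z hz, norm_nonneg (h z)]
    -- ‖1 - h z‖ ≤ (1-a) + ‖z‖ * (‖1 - h z‖ + (1-a))
    have tri2 : ‖(1 : ℂ) - h z‖ ≤ (1 - a) + ‖h z - (a:ℂ)‖ := by
      have : (1 : ℂ) - h z = ((1 - a : ℝ) : ℂ) - (h z - (a:ℂ)) := by push_cast; ring
      rw [this]
      refine (norm_sub_le _ _).trans ?_
      rw [Complex.norm_real, Real.norm_of_nonneg (by linarith)]
    have main : ‖(1 : ℂ) - h z‖ ≤ (1 - a) * (1 + ‖z‖) / (1 - ‖z‖) := by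
      have hz1 : (0:ℝ) < 1 - ‖z‖ := by linarith
      rw [le_div_iff₀ hz1]
      nlinarith [key, tri, tri2, norm_nonneg z]
    -- conclude
    have hzφ : ‖z - φ z‖ = ‖z‖ * ‖(1 : ℂ) - h z‖ := by
      rcases eq_or_ne z 0 with rfl | hz0
      · simp [hφ0]
      · rw [hhval z hz0, ← norm_mul]
        congr 1
        field_simp
    rw [hzφ]
    have hfinal : ‖z‖ * ((1 - a) * (1 + ‖z‖) / (1 - ‖z‖))
        ≤ 2 * ‖z‖ * ((1 + ‖z‖) / (1 - ‖z‖)) * (1 - a) := by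
      have hz1 : (0:ℝ) < 1 - ‖z‖ := by linarith
      have hne : (1 - ‖z‖) ≠ 0 := hz1.ne'
      have hdiff : 2 * ‖z‖ * ((1 + ‖z‖) / (1 - ‖z‖)) * (1 - a)
          - ‖z‖ * ((1 - a) * (1 + ‖z‖) / (1 - ‖z‖))
          = ‖z‖ * (1 + ‖z‖) * (1 - a) / (1 - ‖z‖) := by
        field_simp; ring
      have hd : 0 ≤ ‖z‖ * (1 + ‖z‖) * (1 - a) / (1 - ‖z‖) :=
        div_nonneg (mul_nonneg (mul_nonneg (norm_nonneg z)
          (by linarith [norm_nonneg z])) (by linarith)) hz1.le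
      linarith
    calc ‖z‖ * ‖(1:ℂ) - h z‖ ≤ ‖z‖ * ((1 - a) * (1 + ‖z‖) / (1 - ‖z‖)) :=
          mul_le_mul_of_nonneg_left main (norm_nonneg z)
      _ ≤ _ := hfinal
end

section
/- Define the Legendre polynomials by Rodrigues' formula P_n(x) = (1/(2ⁿ·n!)) · dⁿ/dxⁿ[(x²−1)ⁿ]. Then for every real x with |x| ≤ 1 and every real t with |t| < 1, the series Σ_{n=0}^∞ P_n(x)·tⁿ converges and Σ_{n=0}^∞ P_n(x)·tⁿ = (1 − 2xt + t²)^{−1/2}. -/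
/-- The `n`-th Legendre polynomial, via Rodrigues' formula. -/
noncomputable def legendreP (n : ℕ) (x : ℝ) : ℝ :=
  (1 / ((2 : ℝ) ^ n * (n.factorial : ℝ))) *
    iteratedDeriv n (fun y : ℝ => (y ^ 2 - 1) ^ n) x

open Finset Polynomial


lemma centralBinom_le_four_pow (n : ℕ) : Nat.centralBinom n ≤ 4 ^ n := by
  induction n with
  | zero => simp [Nat.centralBinom]
  | succ n ih =>
    have h := Nat.succ_mul_centralBinom_succ n
    have h2 : (n + 1) * Nat.centralBinom (n + 1) ≤ (n + 1) * 4 ^ (n + 1) := by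
      rw [h]
      calc 2 * (2 * n + 1) * Nat.centralBinom n ≤ 2 * (2 * n + 1) * 4 ^ n :=
            Nat.mul_le_mul_left _ ih
        _ ≤ (n + 1) * 4 ^ (n + 1) := by ring_nf; nlinarith [pow_pos (by norm_num : 0 < 4) n]
    exact Nat.le_of_mul_le_mul_left h2 (Nat.succ_pos n)

/-- Convolution identity for central binomial coefficients, in ℂ. -/
lemma centralBinom_conv (n : ℕ) :
    ∑ k ∈ range (n + 1), (Nat.centralBinom k : ℂ) * (Nat.centralBinom (n - k) : ℂ)
      = 4 ^ n := by
  induction n with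
  | zero => simp [Nat.centralBinom]
  | succ n ih =>
    set B : ℕ → ℂ := fun k => (Nat.centralBinom k : ℂ) with hB
    have hrec : ∀ j : ℕ, ((j : ℂ) + 1) * B (j + 1) = 2 * (2 * j + 1) * B j := by
      intro j
      have h := congrArg (Nat.cast : ℕ → ℂ) (Nat.succ_mul_centralBinom_succ j)
      push_cast at h
      simpa [hB] using h
    set U : ℂ := ∑ k ∈ range (n + 2), (k : ℂ) * B k * B (n + 1 - k) with hUdef
    set W : ℂ := ∑ j ∈ range (n + 1), (j : ℂ) * (B j * B (n - j)) with hWdef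
    set T : ℂ := ∑ j ∈ range (n + 1), B j * B (n - j) with hTdef
    have hU : U = 4 * W + 2 * T := by
      rw [hUdef, Finset.sum_range_succ' (fun k => (k : ℂ) * B k * B (n + 1 - k))]
      simp only [Nat.cast_zero, zero_mul, add_zero]
      have : ∀ j ∈ range (n + 1), ((j + 1 : ℕ) : ℂ) * B (j + 1) * B (n + 1 - (j + 1))
          = 4 * ((j : ℂ) * (B j * B (n - j))) + 2 * (B j * B (n - j)) := by
        intro j hj
        have h1 : n + 1 - (j + 1) = n - j := by omega
        have h2 : ((j + 1 : ℕ) : ℂ) = (j : ℂ) + 1 := by push_cast; ring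
        rw [h1, h2, mul_assoc _ (B (j+1)) _, ← mul_assoc ((j:ℂ)+1), hrec j]
        ring
      rw [Finset.sum_congr rfl this, Finset.sum_add_distrib, ← Finset.mul_sum, ← Finset.mul_sum]
    have hrefl : ∑ k ∈ range (n + 2), ((n + 1 - k : ℕ) : ℂ) * B k * B (n + 1 - k) = U := by
      rw [hUdef, ← Finset.sum_range_reflect (fun k => (k : ℂ) * B k * B (n + 1 - k)) (n + 2)]
      refine Finset.sum_congr rfl fun k hk => ?_
      have hk' : k ≤ n + 1 := by have := Finset.mem_range.mp hk; omega
      have hk2 : k ≤ n + 1 := by have := Finset.mem_range.mp hk; omega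
      have h1 : n + 2 - 1 - k = n + 1 - k := by omega
      have h2 : n + 1 - (n + 1 - k) = k := by omega
      rw [h1, h2]; ring
    have hW2 : 2 * W = (n : ℂ) * T := by
      have hrefl2 : ∑ j ∈ range (n + 1), ((n - j : ℕ) : ℂ) * (B j * B (n - j)) = W := by
        rw [hWdef, ← Finset.sum_range_reflect (fun j => (j : ℂ) * (B j * B (n - j))) (n + 1)]
        refine Finset.sum_congr rfl fun j hj => ?_
        have hj' : j ≤ n := by have := Finset.mem_range.mp hj; omega
        have h1 : n + 1 - 1 - j = n - j := by omega
        have h2 : n - (n - j) = j := by omega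
        rw [h1, h2]; ring
      have : W + ∑ j ∈ range (n + 1), ((n - j : ℕ) : ℂ) * (B j * B (n - j)) = (n : ℂ) * T := by
        rw [hWdef, hTdef, Finset.mul_sum, ← Finset.sum_add_distrib]
        refine Finset.sum_congr rfl fun j hj => ?_
        have hj' : j ≤ n := by have := Finset.mem_range.mp hj; omega
        rw [Nat.cast_sub hj']; ring
      rw [hrefl2] at this; linear_combination this
    have hmain : ((n : ℂ) + 1) * ∑ k ∈ range (n + 2), B k * B (n + 1 - k)
        = ((n : ℂ) + 1) * (4 * 4 ^ n) := by
      have hsplit : ∀ k ∈ range (n + 2),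
          ((n : ℂ) + 1) * (B k * B (n + 1 - k))
            = (k : ℂ) * B k * B (n + 1 - k) + ((n + 1 - k : ℕ) : ℂ) * B k * B (n + 1 - k) := by
        intro k hk
        have hk' : k ≤ n + 1 := by have := Finset.mem_range.mp hk; omega
        rw [Nat.cast_sub hk']; push_cast; ring
      rw [Finset.mul_sum, Finset.sum_congr rfl hsplit, Finset.sum_add_distrib, hrefl, ← hUdef]
      rw [ih] at hW2
      linear_combination 2 * hU + 4 * hW2 + 4 * ih
    have hne : ((n : ℂ) + 1) ≠ 0 := Nat.cast_add_one_ne_zero n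
    have := mul_left_cancel₀ hne hmain
    rw [this]; ring

noncomputable def bc (k : ℕ) : ℂ := (Nat.centralBinom k : ℂ) / 4 ^ k

lemma bc_norm_le_one (k : ℕ) : ‖bc k‖ ≤ 1 := by
  rw [bc, norm_div]
  have h4 : ‖(4 : ℂ) ^ k‖ = 4 ^ k := by
    rw [norm_pow]; norm_num
  rw [h4, Complex.norm_natCast]
  rw [div_le_one (by positivity)]
  exact_mod_cast centralBinom_le_four_pow k

lemma summable_bc_norm {z : ℂ} (hz : ‖z‖ < 1) : Summable fun k => ‖bc k * z ^ k‖ := by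
  refine Summable.of_nonneg_of_le (fun k => norm_nonneg _) (fun k => ?_)
    (summable_geometric_of_lt_one (norm_nonneg z) hz)
  rw [norm_mul, norm_pow]
  calc ‖bc k‖ * ‖z‖ ^ k ≤ 1 * ‖z‖ ^ k := by
        gcongr; exact bc_norm_le_one k
    _ = ‖z‖ ^ k := one_mul _

noncomputable def Sb (z : ℂ) : ℂ := ∑' k, bc k * z ^ k

lemma hasSum_Sb {z : ℂ} (hz : ‖z‖ < 1) : HasSum (fun k => bc k * z ^ k) (Sb z) :=
  (summable_bc_norm hz).of_norm.hasSum

lemma Sb_zero : Sb 0 = 1 := by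
  have : HasSum (fun k => bc k * (0 : ℂ) ^ k) (bc 0) := by
    convert hasSum_single (f := fun k => bc k * (0 : ℂ) ^ k) 0 ?_ using 1
    · simp
    · intro b hb
      simp [pow_eq_zero_iff hb]
  rw [Sb, this.tsum_eq]
  simp [bc, Nat.centralBinom]

lemma Sb_sq {z : ℂ} (hz : ‖z‖ < 1) : Sb z * Sb z = (1 - z)⁻¹ := by
  have hgeo : HasSum (fun n : ℕ => z ^ n) (1 - z)⁻¹ := hasSum_geometric_of_norm_lt_one hz
  have hc := hasSum_sum_range_mul_of_summable_norm (summable_bc_norm hz) (summable_bc_norm hz)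
  rw [(hasSum_Sb hz).tsum_eq] at hc
  have : ∀ n : ℕ, ∑ k ∈ range (n + 1), (bc k * z ^ k) * (bc (n - k) * z ^ (n - k)) = z ^ n := by
    intro n
    have : ∀ k ∈ range (n + 1), (bc k * z ^ k) * (bc (n - k) * z ^ (n - k))
        = ((Nat.centralBinom k : ℂ) * (Nat.centralBinom (n - k) : ℂ)) * (4 ^ n)⁻¹ * z ^ n := by
      intro k hk
      have hk' : k ≤ n := by have := Finset.mem_range.mp hk; omega
      have hzp : z ^ k * z ^ (n - k) = z ^ n := by
        rw [← pow_add]; congr 1; omega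
      have h4 : (4 : ℂ) ^ k * 4 ^ (n - k) = 4 ^ n := by
        rw [← pow_add]; congr 1; omega
      simp only [bc]
      rw [← hzp, ← h4]; ring
    rw [Finset.sum_congr rfl this, ← Finset.sum_mul, ← Finset.sum_mul, centralBinom_conv]
    have h4n : (4 : ℂ) ^ n ≠ 0 := pow_ne_zero _ (by norm_num)
    field_simp
  simp_rw [this] at hc
  exact hc.unique hgeo

lemma Sb_eq_cpow {z : ℂ} (hz : ‖z‖ < 1) : Sb z = (1 - z) ^ (-(1/2) : ℂ) := by
  have hne : ∀ τ : ℝ, τ ∈ Set.Icc (0:ℝ) 1 → (1 : ℂ) - (τ : ℂ) * z ≠ 0 := by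
    intro τ hτ
    have : ‖(τ : ℂ) * z‖ < 1 := by
      rw [norm_mul, Complex.norm_real]
      calc ‖τ‖ * ‖z‖ ≤ 1 * ‖z‖ := by
            gcongr
            rw [Real.norm_eq_abs, _root_.abs_of_nonneg hτ.1]; exact hτ.2
        _ < 1 := by rwa [one_mul]
    intro h
    rw [sub_eq_zero] at h
    rw [← h] at this; simp at this
  -- the function φ
  set φ : ℝ → ℂ := fun τ => Sb ((τ : ℂ) * z) * ((1 - (τ : ℂ) * z) ^ ((1/2 : ℂ))) with hφ
  have hnorm : ∀ τ : ℝ, τ ∈ Set.Icc (0:ℝ) 1 → ‖(τ : ℂ) * z‖ < 1 := by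
    intro τ hτ
    rw [norm_mul, Complex.norm_real]
    calc ‖τ‖ * ‖z‖ ≤ 1 * ‖z‖ := by
          gcongr
          rw [Real.norm_eq_abs, _root_.abs_of_nonneg hτ.1]; exact hτ.2
      _ < 1 := by rwa [one_mul]
  have hslit : ∀ τ : ℝ, τ ∈ Set.Icc (0:ℝ) 1 → (0:ℝ) < ((1:ℂ) - (τ:ℂ) * z).re := by
    intro τ hτ
    have h1 : ((τ:ℂ) * z).re ≤ ‖(τ:ℂ) * z‖ := Complex.re_le_norm _
    have h2 := hnorm τ hτ
    simp only [Complex.sub_re, Complex.one_re]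
    linarith
  have hsq : ∀ τ : ℝ, τ ∈ Set.Icc (0:ℝ) 1 → φ τ * φ τ = 1 := by
    intro τ hτ
    have hcp : ((1 - (τ:ℂ) * z) ^ ((1/2 : ℂ))) * ((1 - (τ:ℂ) * z) ^ ((1/2 : ℂ)))
        = 1 - (τ:ℂ) * z := by
      rw [← Complex.cpow_add _ _ (hne τ hτ)]
      norm_num
    have hSb2 := Sb_sq (hnorm τ hτ)
    rw [hφ]
    calc Sb ((τ:ℂ)*z) * (1 - (τ:ℂ)*z) ^ ((1/2:ℂ)) * (Sb ((τ:ℂ)*z) * (1 - (τ:ℂ)*z) ^ ((1/2:ℂ)))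
        = (Sb ((τ:ℂ)*z) * Sb ((τ:ℂ)*z)) * ((1 - (τ:ℂ)*z) ^ ((1/2:ℂ)) * (1 - (τ:ℂ)*z) ^ ((1/2:ℂ))) := by ring
      _ = (1 - (τ:ℂ)*z)⁻¹ * (1 - (τ:ℂ)*z) := by rw [hSb2, hcp]
      _ = 1 := inv_mul_cancel₀ (hne τ hτ)
  have hcont : ContinuousOn φ (Set.Icc (0:ℝ) 1) := by
    apply ContinuousOn.mul
    · -- continuity of Sb (τ z)
      have : ContinuousOn (fun τ : ℝ => ∑' k, bc k * ((τ:ℂ) * z) ^ k) (Set.Icc (0:ℝ) 1) := by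
        apply continuousOn_tsum (u := fun k => ‖z‖ ^ k)
        · intro k
          apply Continuous.continuousOn
          continuity
        · exact summable_geometric_of_lt_one (norm_nonneg z) hz
        · intro k τ hτ
          rw [norm_mul, norm_pow]
          calc ‖bc k‖ * ‖(τ:ℂ) * z‖ ^ k ≤ 1 * ‖z‖ ^ k := by
                apply mul_le_mul (bc_norm_le_one k) _ (by positivity) zero_le_one
                apply pow_le_pow_left₀ (norm_nonneg _)
                rw [norm_mul, Complex.norm_real, Real.norm_eq_abs, _root_.abs_of_nonneg hτ.1]
                calc τ * ‖z‖ ≤ 1 * ‖z‖ := by gcongr; exact hτ.2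
                  _ = ‖z‖ := one_mul _
            _ = ‖z‖ ^ k := one_mul _
      exact this
    · intro τ hτ
      apply ContinuousAt.continuousWithinAt
      apply ContinuousAt.cpow
      · fun_prop
      · exact continuousAt_const
      · exact Or.inl (hslit τ hτ)
  have hpm : ∀ τ : ℝ, τ ∈ Set.Icc (0:ℝ) 1 → φ τ = 1 ∨ φ τ = -1 := by
    intro τ hτ
    have h := hsq τ hτ
    have : (φ τ - 1) * (φ τ + 1) = 0 := by linear_combination h
    rcases mul_eq_zero.mp this with h' | h'
    · left; exact sub_eq_zero.mp h'
    · right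
      have := eq_neg_of_add_eq_zero_left h'
      exact this
  have hφ0 : φ 0 = 1 := by
    rw [hφ]; simp [Sb_zero]
  have hφ1 : φ 1 = 1 := by
    rcases hpm 1 (by norm_num) with h | h
    · exact h
    · exfalso
      have hψcont : ContinuousOn (fun τ => (φ τ).re) (Set.Icc (0:ℝ) 1) :=
        Complex.continuous_re.comp_continuousOn hcont
      have hivt := intermediate_value_Icc' (by norm_num : (0:ℝ) ≤ 1) hψcont
      have h1re : (φ 1).re = -1 := by rw [h]; simp
      have h0re : (φ 0).re = 1 := by rw [hφ0]; simp
      have : (0:ℝ) ∈ Set.Icc ((φ 1).re) ((φ 0).re) := by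
        rw [h1re, h0re]; norm_num
      obtain ⟨τ, hτ, hψτ⟩ := hivt this
      simp only [] at hψτ
      rcases hpm τ hτ with h' | h' <;> rw [h'] at hψτ <;> norm_num at hψτ
  -- conclude
  have : Sb z * (1 - z) ^ ((1/2 : ℂ)) = 1 := by
    have := hφ1
    rw [hφ] at this
    simpa using this
  have hSb : Sb z = ((1 - z) ^ ((1/2 : ℂ)))⁻¹ := eq_inv_of_mul_eq_one_left (by
    linear_combination this)
  rw [hSb, ← Complex.cpow_neg]

theorem hasSum_binom {z : ℂ} (hz : ‖z‖ < 1) :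
    HasSum (fun k => bc k * z ^ k) ((1 - z) ^ (-(1/2) : ℂ)) := by
  rw [← Sb_eq_cpow hz]; exact hasSum_Sb hz

lemma iteratedDeriv_polyeval (p : ℝ[X]) (n : ℕ) :
    iteratedDeriv n (fun y => p.eval y) = fun y => (Polynomial.derivative^[n] p).eval y := by
  induction n with
  | zero => simp
  | succ n ih =>
    rw [iteratedDeriv_succ, ih]
    funext y
    rw [Function.iterate_succ_apply']
    exact Polynomial.deriv _

lemma legendreP_explicit (n : ℕ) (x : ℝ) :
    legendreP n x = (1 / ((2:ℝ)^n * (n.factorial : ℝ))) * ∑ j ∈ range (n+1),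
      (-1:ℝ)^j * (n.choose j : ℝ) * (((2*(n-j)).descFactorial n : ℕ) : ℝ) * x^(n - 2*j) := by
  rw [legendreP]
  congr 1
  have hfun : (fun y : ℝ => (y ^ 2 - 1) ^ n) = fun y => ((X^2 - 1 : ℝ[X])^n).eval y := by
    funext y; simp
  rw [hfun, iteratedDeriv_polyeval]
  have hexp : (X^2 - 1 : ℝ[X])^n
      = ∑ j ∈ range (n+1), ((-1:ℝ)^j * (n.choose j : ℝ)) • X^(2*(n-j)) := by
    have : (X^2 - 1 : ℝ[X]) = -1 + X^2 := by ring
    rw [this, add_pow]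
    refine Finset.sum_congr rfl fun j hj => ?_
    rw [← pow_mul]
    rw [Algebra.smul_def]
    simp only [algebraMap_eq, map_mul, map_pow, map_neg, map_one, map_natCast]
    ring
  rw [hexp, Polynomial.iterate_derivative_sum]
  simp only [Polynomial.eval_finset_sum]
  refine Finset.sum_congr rfl fun j hj => ?_
  have hj' : j ≤ n := by have := Finset.mem_range.mp hj; omega
  rw [Polynomial.iterate_derivative_smul, Polynomial.iterate_derivative_X_pow_eq_natCast_mul]
  have he : 2*(n-j) - n = n - 2*j := by omega
  rw [he]
  simp [mul_assoc]

lemma abs_legendreP_le (n : ℕ) {x : ℝ} (hx : |x| ≤ 1) : |legendreP n x| ≤ 4 ^ n := by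
  rw [legendreP_explicit]
  have hb : ∀ j ∈ range (n+1),
      |(-1:ℝ)^j * (n.choose j : ℝ) * (((2*(n-j)).descFactorial n : ℕ) : ℝ) * x^(n - 2*j)|
        ≤ (n.choose j : ℝ) * ((n.factorial : ℝ) * 4^n) := by
    intro j hj
    rw [abs_mul, abs_mul, abs_mul, abs_pow, abs_neg, abs_one, one_pow, one_mul, abs_pow]
    have h1 : |x| ^ (n - 2*j) ≤ 1 := pow_le_one₀ (abs_nonneg x) hx
    have h2 : ((2*(n-j)).descFactorial n : ℕ) ≤ (n.factorial) * 4^n := by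
      calc (2*(n-j)).descFactorial n ≤ (2*n).descFactorial n :=
            Nat.descFactorial_le n (by omega)
        _ = n.factorial * (2*n).choose n := Nat.descFactorial_eq_factorial_mul_choose _ _
        _ = n.factorial * Nat.centralBinom n := by rw [Nat.centralBinom]
        _ ≤ n.factorial * 4^n := Nat.mul_le_mul_left _ (centralBinom_le_four_pow n)
    have h2' : (((2*(n-j)).descFactorial n : ℕ) : ℝ) ≤ (n.factorial : ℝ) * 4^n := by
      exact_mod_cast h2
    calc |(n.choose j : ℝ)| * |(((2*(n-j)).descFactorial n : ℕ) : ℝ)| * |x|^(n-2*j)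
        ≤ |(n.choose j : ℝ)| * |(((2*(n-j)).descFactorial n : ℕ) : ℝ)| * 1 := by
          apply mul_le_mul_of_nonneg_left h1 (by positivity)
      _ = (n.choose j : ℝ) * (((2*(n-j)).descFactorial n : ℕ) : ℝ) := by
          rw [mul_one, abs_of_nonneg (by positivity : (0:ℝ) ≤ (n.choose j : ℝ)),
            abs_of_nonneg (by positivity : (0:ℝ) ≤ (((2*(n-j)).descFactorial n : ℕ) : ℝ))]
      _ ≤ (n.choose j : ℝ) * ((n.factorial : ℝ) * 4^n) := by
          apply mul_le_mul_of_nonneg_left h2' (by positivity)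
  have hfac : (0:ℝ) < (2:ℝ)^n * (n.factorial : ℝ) := by positivity
  rw [abs_mul]
  have hsum : |∑ j ∈ range (n+1), (-1:ℝ)^j * (n.choose j : ℝ) *
      (((2*(n-j)).descFactorial n : ℕ) : ℝ) * x^(n - 2*j)|
      ≤ (2:ℝ)^n * ((n.factorial : ℝ) * 4^n) := by
    calc |∑ j ∈ range (n+1), (-1:ℝ)^j * (n.choose j : ℝ) *
        (((2*(n-j)).descFactorial n : ℕ) : ℝ) * x^(n - 2*j)|
        ≤ ∑ j ∈ range (n+1), |(-1:ℝ)^j * (n.choose j : ℝ) *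
          (((2*(n-j)).descFactorial n : ℕ) : ℝ) * x^(n - 2*j)| := Finset.abs_sum_le_sum_abs _ _
      _ ≤ ∑ j ∈ range (n+1), (n.choose j : ℝ) * ((n.factorial : ℝ) * 4^n) :=
          Finset.sum_le_sum hb
      _ = (∑ j ∈ range (n+1), (n.choose j : ℝ)) * ((n.factorial : ℝ) * 4^n) := by
          rw [← Finset.sum_mul]
      _ = (2:ℝ)^n * ((n.factorial : ℝ) * 4^n) := by
          congr 1
          have h := congrArg (Nat.cast : ℕ → ℝ) (Nat.sum_range_choose n)
          push_cast at h
          exact h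
  calc |1 / ((2:ℝ)^n * (n.factorial:ℝ))| * |∑ j ∈ range (n+1), (-1:ℝ)^j * (n.choose j : ℝ) *
      (((2*(n-j)).descFactorial n : ℕ) : ℝ) * x^(n - 2*j)|
      ≤ (1 / ((2:ℝ)^n * (n.factorial:ℝ))) * ((2:ℝ)^n * ((n.factorial : ℝ) * 4^n)) := by
        rw [abs_of_nonneg (by positivity : (0:ℝ) ≤ 1 / ((2:ℝ)^n * (n.factorial:ℝ)))]
        apply mul_le_mul_of_nonneg_left hsum (by positivity)
    _ = 4^n := by field_simp

/-- real coefficient -/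
noncomputable def br (k : ℕ) : ℝ := (Nat.centralBinom k : ℝ) / 4 ^ k

lemma br_nonneg (k : ℕ) : 0 ≤ br k := by unfold br; positivity

lemma br_le_one (k : ℕ) : br k ≤ 1 := by
  rw [br, div_le_one (by positivity)]
  exact_mod_cast centralBinom_le_four_pow k

/-- real binomial series -/
lemma hasSum_binom_real {q : ℝ} (hq : |q| < 1) :
    HasSum (fun m => br m * q ^ m) ((1 - q) ^ (-(1/2) : ℝ)) := by
  have hz : ‖(q : ℂ)‖ < 1 := by rwa [Complex.norm_real, Real.norm_eq_abs]
  have h := hasSum_binom hz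
  have h1q : (0:ℝ) < 1 - q := by cases abs_lt.mp hq; linarith
  have hcast : ((1:ℂ) - (q:ℂ)) ^ (-(1/2) : ℂ) = (((1 - q) ^ (-(1/2) : ℝ) : ℝ) : ℂ) := by
    have e1 : ((1:ℂ) - (q:ℂ)) = (((1 - q : ℝ)) : ℂ) := by push_cast; ring
    have e2 : ((-(1/2)) : ℂ) = ((-(1/2) : ℝ) : ℂ) := by norm_num
    rw [e1, e2, ← Complex.ofReal_cpow (le_of_lt h1q)]
  rw [hcast] at h
  have hterm : ∀ m : ℕ, bc m * (q:ℂ) ^ m = ((br m * q ^ m : ℝ) : ℂ) := by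
    intro m
    rw [bc, br]
    push_cast
    ring
  simp_rw [hterm] at h
  exact Complex.hasSum_ofReal.mp h

lemma sum_choose_pow (u v : ℝ) (m : ℕ) :
    ∑ j ∈ range (m+1), (m.choose j : ℝ) * u^(m-j) * v^j = (u + v)^m := by
  rw [add_comm u v, add_pow]
  exact Finset.sum_congr rfl fun j hj => by ring

theorem hasSum_small {x t : ℝ} (hx : |x| ≤ 1) (ht : |t| < 1/8) :
    HasSum (fun n => legendreP n x * t ^ n) ((1 - (2*x*t - t^2)) ^ (-(1/2) : ℝ)) := by
  set q : ℝ := 2*x*t - t^2 with hqdef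
  have habs : ∀ s : ℝ, |s| ≤ 1 → |2*s*t - t^2| ≤ 2*|t| + t^2 := by
    intro s hs
    calc |2*s*t - t^2| ≤ |2*s*t| + |t^2| := abs_sub _ _
      _ ≤ 2*|t| + t^2 := by
          rw [abs_mul, abs_mul, abs_two, abs_pow]
          have : |s| * |t| ≤ 1 * |t| := mul_le_mul_of_nonneg_right hs (abs_nonneg t)
          rw [sq_abs]
          nlinarith [abs_nonneg s, abs_nonneg t]
  have hr : 2*|t| + t^2 < 1 := by
    have h1 : |t| < 1/8 := ht
    nlinarith [abs_nonneg t, sq_abs t]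
  have hq : |q| < 1 := lt_of_le_of_lt (habs x hx) hr
  -- the double-indexed function
  set g : ℕ × ℕ → ℝ := fun p =>
    if p.2 ≤ p.1 then br p.1 * (p.1.choose p.2 : ℝ) * (2*x*t)^(p.1-p.2) * (-(t^2))^p.2 else 0
    with hgdef
  have hfiber : ∀ m : ℕ, HasSum (fun j => g (m, j)) (br m * q ^ m) := by
    intro m
    have hsupp : ∀ j ∉ range (m+1), g (m, j) = 0 := by
      intro j hj
      have : ¬ (j ≤ m) := by simpa [Nat.lt_succ_iff] using hj
      simp [hgdef, this]
    have := hasSum_sum_of_ne_finset_zero (L := SummationFilter.unconditional ℕ) hsupp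
    convert this using 1
    rw [hqdef]
    have : ∀ j ∈ range (m+1), g (m, j)
        = br m * ((m.choose j : ℝ) * (2*x*t)^(m-j) * (-(t^2))^j) := by
      intro j hj
      have hj' : j ≤ m := by have := Finset.mem_range.mp hj; omega
      simp [hgdef, hj']
      ring
    rw [Finset.sum_congr rfl this, ← Finset.mul_sum]
    congr 1
    rw [show (2*x*t - t^2 : ℝ) = (2*x*t) + (-(t^2)) by ring,
      ← sum_choose_pow (2*x*t) (-(t^2)) m]
  -- absolute summability
  have habs_fiber : ∀ m : ℕ, HasSum (fun j => |g (m, j)|) (br m * (2 * |x| * |t| + t^2) ^ m) := by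
    intro m
    have hsupp : ∀ j ∉ range (m+1), |g (m, j)| = 0 := by
      intro j hj
      have : ¬ (j ≤ m) := by simpa [Nat.lt_succ_iff] using hj
      simp [hgdef, this]
    have := hasSum_sum_of_ne_finset_zero (L := SummationFilter.unconditional ℕ) hsupp
    convert this using 1
    have : ∀ j ∈ range (m+1), |g (m, j)|
        = br m * ((m.choose j : ℝ) * (2 * |x| * |t|)^(m-j) * (t^2)^j) := by
      intro j hj
      have hj' : j ≤ m := by have := Finset.mem_range.mp hj; omega
      simp only [hgdef, if_pos hj']
      rw [abs_mul, abs_mul, abs_mul, abs_pow, abs_pow, abs_neg,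
        abs_of_nonneg (sq_nonneg t), abs_of_nonneg (br_nonneg m),
        Nat.abs_cast, abs_mul, abs_mul, abs_two]
      ring
    rw [Finset.sum_congr rfl this, ← Finset.mul_sum]
    congr 1
    rw [← sum_choose_pow (2 * |x| * |t|) (t^2) m]
  have hxr : 2 * |x| * |t| + t^2 < 1 := by
    have : 2 * |x| * |t| ≤ 2*|t| := by nlinarith [abs_nonneg t]
    nlinarith
  have hxr0 : 0 ≤ 2 * |x| * |t| + t^2 := by positivity
  have hsummable_abs : Summable (fun p : ℕ × ℕ => |g p|) := by
    rw [summable_prod_of_nonneg (fun p => abs_nonneg _)]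
    constructor
    · intro m
      exact (habs_fiber m).summable
    · apply Summable.of_nonneg_of_le (fun m => tsum_nonneg (fun j => abs_nonneg _))
        (fun m => ?_) (summable_geometric_of_lt_one hxr0 hxr)
      rw [(habs_fiber m).tsum_eq]
      calc br m * (2 * |x| * |t| + t^2) ^ m ≤ 1 * (2 * |x| * |t| + t^2) ^ m := by
            apply mul_le_mul_of_nonneg_right (br_le_one m) (by positivity)
        _ = (2 * |x| * |t| + t^2) ^ m := one_mul _
  have hsummable : Summable g := hsummable_abs.of_abs
  have hgsum : HasSum g ((1 - q) ^ (-(1/2) : ℝ)) := by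
    have h1 := hsummable.hasSum
    have h2 : HasSum (fun m => br m * q ^ m) (∑' p, g p) := h1.prod_fiberwise hfiber
    rw [(h2.unique (hasSum_binom_real hq) : ∑' p, g p = _)] at h1
    exact h1
  -- reindex
  set φ : ℕ × ℕ → ℕ × ℕ := fun p => (p.1 + p.2, p.2) with hφdef
  have hφinj : Function.Injective φ := by
    intro p p' h
    simp only [hφdef, Prod.mk.injEq] at h
    obtain ⟨h1, h2⟩ := h
    exact Prod.ext (by omega) h2
  set h : ℕ × ℕ → ℝ := fun p =>
    if 2*p.2 ≤ p.1 then br (p.1 - p.2) * ((p.1 - p.2).choose p.2 : ℝ)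
      * (2*x*t)^(p.1 - 2*p.2) * (-(t^2))^p.2 else 0 with hhdef
  have hcomp : h ∘ φ = g := by
    funext p
    obtain ⟨m, j⟩ := p
    simp only [hhdef, hgdef, hφdef, Function.comp_apply]
    have e1 : m + j - j = m := by omega
    have e2 : m + j - 2*j = m - j := by omega
    by_cases hc : j ≤ m
    · rw [if_pos (by omega : 2*j ≤ m + j), if_pos hc, e1, e2]
    · rw [if_neg (by omega : ¬ 2*j ≤ m + j), if_neg hc]
  have hvanish : ∀ p ∉ Set.range φ, h p = 0 := by
    intro p hp
    obtain ⟨n, j⟩ := p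
    have : ¬ (j ≤ n) := by
      intro hle
      exact hp ⟨(n - j, j), by simp [hφdef]; omega⟩
    have : ¬ (2*j ≤ n) := by omega
    simp [hhdef, this]
  have hhsum : HasSum h ((1 - q) ^ (-(1/2) : ℝ)) := by
    rw [← Function.Injective.hasSum_iff hφinj hvanish, hcomp]
    exact hgsum
  -- group by n
  have hfiber2 : ∀ n : ℕ, HasSum (fun j => h (n, j)) (legendreP n x * t ^ n) := by
    intro n
    have hsupp : ∀ j ∉ range (n+1), h (n, j) = 0 := by
      intro j hj
      have hgt : n < j := by
        by_contra hc
        exact hj (Finset.mem_range.mpr (by omega))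
      have : ¬ (2*j ≤ n) := by omega
      simp [hhdef, this]
    have hsum := hasSum_sum_of_ne_finset_zero (L := SummationFilter.unconditional ℕ) hsupp
    convert hsum using 1
    have hterm : ∀ j ∈ range (n+1), h (n, j)
        = ((-1:ℝ)^j * (n.choose j : ℝ) * (((2*(n-j)).descFactorial n : ℕ) : ℝ) * x^(n - 2*j))
          * t^n * (1 / ((2:ℝ)^n * (n.factorial : ℝ))) := ?_
    · rw [Finset.sum_congr rfl hterm, legendreP_explicit, ← Finset.sum_mul, ← Finset.sum_mul]
      ring
    refine fun j hj => ?_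
    have hj' : j ≤ n := by have := Finset.mem_range.mp hj; omega
    by_cases hcase : 2*j ≤ n
    · simp only [hhdef, if_pos hcase]
      have edf : ((2*(n-j)).descFactorial n : ℕ) = n.factorial * (2*(n-j)).choose n := by
        exact Nat.descFactorial_eq_factorial_mul_choose _ _
      -- powers
      have ep : (2*x*t)^(n-2*j) * (-(t^2))^j = (2*x)^(n-2*j) * (-1:ℝ)^j * t^n := by
        have e1 : (2*x*t)^(n-2*j) = (2*x)^(n-2*j) * t^(n-2*j) := by rw [mul_pow]
        have e2 : (-(t^2))^j = (-1:ℝ)^j * t^(2*j) := by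
          rw [neg_pow, ← pow_mul, Nat.mul_comm 2 j]
        rw [e1, e2]
        have e3 : t^(n-2*j) * t^(2*j) = t^n := by
          rw [← pow_add]; congr 1; omega
        calc (2*x)^(n-2*j) * t^(n-2*j) * ((-1:ℝ)^j * t^(2*j))
            = (2*x)^(n-2*j) * (-1:ℝ)^j * (t^(n-2*j) * t^(2*j)) := by ring
          _ = (2*x)^(n-2*j) * (-1:ℝ)^j * t^n := by rw [e3]
      rw [mul_assoc, ep]
      -- now the combinatorial identity
      have key : br (n-j) * ((n-j).choose j : ℝ) * (2:ℝ)^(n-2*j)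
          = (1 / ((2:ℝ)^n * (n.factorial : ℝ))) * (n.choose j : ℝ)
            * (((2*(n-j)).descFactorial n : ℕ) : ℝ) := by
        set m : ℕ := n - j with hm
        have hjm : j ≤ m := by omega
        have hnm : n = m + j := by omega
        have hn2m : n ≤ 2*m := by omega
        -- choose identity: C(2m,m)*C(m,j) = C(m+j,j)*C(2m,m+j)
        have hchoose : (Nat.centralBinom m : ℝ) * ((m.choose j : ℕ) : ℝ)
            = (((m+j).choose j : ℕ) : ℝ) * (((2*m).choose (m+j) : ℕ) : ℝ) := by
          rw [Nat.centralBinom]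
          rw [Nat.cast_choose ℝ (by omega : m ≤ 2*m), Nat.cast_choose ℝ hjm,
            Nat.cast_choose ℝ (by omega : j ≤ m + j), Nat.cast_choose ℝ (by omega : m + j ≤ 2*m)]
          have e1 : 2*m - m = m := by omega
          have e2 : m + j - j = m := by omega
          have e3 : 2*m - (m+j) = m - j := by omega
          rw [e1, e2, e3]
          have f1 : (Nat.factorial m : ℝ) ≠ 0 := by positivity
          have f2 : (Nat.factorial j : ℝ) ≠ 0 := by positivity
          have f3 : (Nat.factorial (m-j) : ℝ) ≠ 0 := by positivity
          have f4 : (Nat.factorial (m+j) : ℝ) ≠ 0 := by positivity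
          field_simp
        have edf2 : (((2*m).descFactorial n : ℕ) : ℝ)
            = (n.factorial : ℝ) * (((2*m).choose n : ℕ) : ℝ) := by
          rw [Nat.descFactorial_eq_factorial_mul_choose]
          push_cast; ring
        rw [br, edf2]
        have hpow : (4:ℝ)^m = 2^(n-2*j) * 2^n := by
          rw [← pow_add]
          have h42 : (4:ℝ) = 2^2 := by norm_num
          rw [h42, ← pow_mul]
          congr 1
          omega
        have hne2 : (2:ℝ)^n ≠ 0 := by positivity
        have hne3 : (n.factorial : ℝ) ≠ 0 := by positivity
        have hne4 : (2:ℝ)^(n-2*j) ≠ 0 := by positivity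
        rw [show n.choose j = (m+j).choose j from by rw [← hnm],
            show (2*m).choose n = (2*m).choose (m+j) from by rw [← hnm], hpow]
        field_simp
        linear_combination hchoose
      calc br (n-j) * ((n-j).choose j : ℝ) * ((2*x)^(n-2*j) * (-1:ℝ)^j * t^n)
          = (br (n-j) * ((n-j).choose j : ℝ) * (2:ℝ)^(n-2*j)) * (x^(n-2*j) * (-1:ℝ)^j * t^n) := by
            rw [mul_pow]; ring
        _ = ((1 / ((2:ℝ)^n * (n.factorial : ℝ))) * (n.choose j : ℝ)
            * (((2*(n-j)).descFactorial n : ℕ) : ℝ)) * (x^(n-2*j) * (-1:ℝ)^j * t^n) := by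
            rw [key]
        _ = (-1:ℝ)^j * (n.choose j : ℝ) * (((2*(n-j)).descFactorial n : ℕ) : ℝ) * x^(n - 2*j) * t^n
            * (1 / ((2:ℝ)^n * (n.factorial : ℝ))) := by ring
    · -- 2*j > n : both sides zero
      simp only [hhdef, if_neg hcase]
      have : (2*(n-j)).descFactorial n = 0 := by
        apply Nat.descFactorial_eq_zero_iff_lt.mpr
        omega
      rw [this]
      simp
  exact hhsum.prod_fiberwise hfiber2

set_option maxHeartbeats 1000000 in

lemma coeff_unique {d : ℕ → ℂ} {C M ε : ℝ} (hC : 0 ≤ C) (hM : 0 < M) (hε : 0 < ε)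
    (hd : ∀ n, ‖d n‖ ≤ C * M ^ n)
    (h : ∀ t : ℝ, |t| < ε → HasSum (fun n => d n * (t : ℂ) ^ n) 0) :
    ∀ n, d n = 0 := by
  intro m
  induction m using Nat.strong_induction_on with
  | _ m IH =>
  set δ : ℝ := min ε (1 / (2 * M)) with hδdef
  have hδpos : 0 < δ := lt_min hε (by positivity)
  set K : ℝ := 2 * C * M ^ (m + 1) with hK
  have hKnn : 0 ≤ K := by positivity
  have key : ∀ τ : ℝ, 0 < τ → τ < δ → ‖d m‖ ≤ K * τ := by
    intro τ hτ0 hτδ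
    have hτε : |τ| < ε := by
      rw [abs_of_pos hτ0]; exact lt_of_lt_of_le hτδ (min_le_left _ _)
    have hMτ : M * τ ≤ 1 / 2 := by
      have : τ < 1 / (2 * M) := lt_of_lt_of_le hτδ (min_le_right _ _)
      rw [lt_div_iff₀ (by positivity)] at this
      nlinarith
    have hMτ0 : 0 ≤ M * τ := by positivity
    have hsum := h τ hτε
    have hsummable := hsum.summable
    have htsum : ∑' n, d n * (τ : ℂ) ^ n = 0 := hsum.tsum_eq
    have hsplit := Summable.sum_add_tsum_nat_add (f := fun n => d n * (τ : ℂ) ^ n) (m + 1) hsummable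
    rw [htsum] at hsplit
    -- the finite part is d m * τ^m
    have hfin : ∑ i ∈ Finset.range (m + 1), d i * (τ : ℂ) ^ i = d m * (τ : ℂ) ^ m := by
      rw [Finset.sum_range_succ]
      have : ∑ i ∈ Finset.range m, d i * (τ : ℂ) ^ i = 0 := by
        apply Finset.sum_eq_zero
        intro i hi
        rw [IH i (Finset.mem_range.mp hi), zero_mul]
      rw [this, zero_add]
    rw [hfin] at hsplit
    set R : ℂ := ∑' i : ℕ, d (i + (m + 1)) * (τ : ℂ) ^ (i + (m + 1)) with hR
    have hdmR : d m * (τ : ℂ) ^ m = -R := by linear_combination hsplit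
    -- bound ‖R‖
    have hsummable2 : Summable (fun i : ℕ => d (i + (m + 1)) * (τ : ℂ) ^ (i + (m + 1))) :=
      (summable_nat_add_iff (f := fun n => d n * (τ : ℂ) ^ n) (m + 1)).mpr hsummable
    have hbound : ∀ i : ℕ, ‖d (i + (m + 1)) * (τ : ℂ) ^ (i + (m + 1))‖
        ≤ (C * (M * τ) ^ (m + 1)) * (M * τ) ^ i := by
      intro i
      rw [norm_mul, norm_pow, Complex.norm_real, Real.norm_eq_abs, abs_of_pos hτ0]
      calc ‖d (i + (m + 1))‖ * τ ^ (i + (m + 1))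
          ≤ (C * M ^ (i + (m + 1))) * τ ^ (i + (m + 1)) := by
            apply mul_le_mul_of_nonneg_right (hd _) (by positivity)
        _ = (C * (M * τ) ^ (m + 1)) * (M * τ) ^ i := by
            rw [mul_pow, mul_pow, pow_add, pow_add]; ring
    have hgeo : Summable (fun i : ℕ => (C * (M * τ) ^ (m + 1)) * (M * τ) ^ i) :=
      (summable_geometric_of_lt_one hMτ0 (by linarith)).mul_left _
    have hRle : ‖R‖ ≤ (C * (M * τ) ^ (m + 1)) * (1 - M * τ)⁻¹ := by
      calc ‖R‖ ≤ ∑' i : ℕ, (C * (M * τ) ^ (m + 1)) * (M * τ) ^ i :=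
            tsum_of_norm_bounded hgeo.hasSum hbound
        _ = (C * (M * τ) ^ (m + 1)) * (1 - M * τ)⁻¹ := by
            rw [tsum_mul_left, tsum_geometric_of_lt_one hMτ0 (by linarith)]
    have hinv : (1 - M * τ)⁻¹ ≤ 2 := by
      rw [inv_le_comm₀ (by linarith) (by norm_num)]
      linarith
    have hRle2 : ‖R‖ ≤ 2 * C * (M * τ) ^ (m + 1) := by
      calc ‖R‖ ≤ (C * (M * τ) ^ (m + 1)) * (1 - M * τ)⁻¹ := hRle
        _ ≤ (C * (M * τ) ^ (m + 1)) * 2 := by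
            apply mul_le_mul_of_nonneg_left hinv (by positivity)
        _ = 2 * C * (M * τ) ^ (m + 1) := by ring
    -- conclude
    have hnorm : ‖d m‖ * τ ^ m ≤ (2 * C * M ^ (m+1) * τ) * τ ^ m := by
      have : ‖d m * (τ : ℂ) ^ m‖ = ‖d m‖ * τ ^ m := by
        rw [norm_mul, norm_pow, Complex.norm_real, Real.norm_eq_abs, abs_of_pos hτ0]
      calc ‖d m‖ * τ ^ m = ‖d m * (τ : ℂ) ^ m‖ := this.symm
        _ = ‖R‖ := by rw [hdmR, norm_neg]
        _ ≤ 2 * C * (M * τ) ^ (m + 1) := hRle2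
        _ = (2 * C * M ^ (m+1) * τ) * τ ^ m := by rw [mul_pow, pow_succ]; ring
    have := mul_le_mul_of_nonneg_right hnorm (le_of_lt (inv_pos.mpr (pow_pos hτ0 m)))
    rw [mul_assoc, mul_inv_cancel₀ (ne_of_gt (pow_pos hτ0 m)), mul_one,
      mul_assoc, mul_inv_cancel₀ (ne_of_gt (pow_pos hτ0 m)), mul_one] at this
    exact this
  -- take τ → 0
  by_contra h0
  have hdm : 0 < ‖d m‖ := norm_pos_iff.mpr h0
  set τ : ℝ := min (δ / 2) (‖d m‖ / (2 * (K + 1))) with hτdef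
  have hτ0 : 0 < τ := lt_min (by positivity) (by positivity)
  have hτδ : τ < δ := lt_of_le_of_lt (min_le_left _ _) (by linarith)
  have h1 := key τ hτ0 hτδ
  have h2 : τ ≤ ‖d m‖ / (2 * (K + 1)) := min_le_right _ _
  have : K * τ ≤ K * (‖d m‖ / (2 * (K + 1))) := mul_le_mul_of_nonneg_left h2 hKnn
  have hlt : K * (‖d m‖ / (2 * (K + 1))) < ‖d m‖ := by
    rw [mul_div_assoc']
    rw [div_lt_iff₀ (by positivity)]
    nlinarith
  linarith

section main

variable {x : ℝ} (hx : |x| ≤ 1)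

/-- the complex number `x + i√(1-x²)` -/
noncomputable def alf (x : ℝ) : ℂ := (x : ℂ) + (Real.sqrt (1 - x^2) : ℂ) * Complex.I

lemma alf_re (x : ℝ) : (alf x).re = x := by simp [alf]

lemma alf_im (x : ℝ) : (alf x).im = Real.sqrt (1 - x^2) := by simp [alf]

lemma sq_sqrt' (hx : |x| ≤ 1) : (Real.sqrt (1 - x^2))^2 = 1 - x^2 := by
  apply Real.sq_sqrt
  have := abs_le.mp hx
  nlinarith

lemma normSq_alf (hx : |x| ≤ 1) : Complex.normSq (alf x) = 1 := by
  rw [Complex.normSq_apply, alf_re, alf_im]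
  have := sq_sqrt' hx
  nlinarith [this]

lemma norm_alf (hx : |x| ≤ 1) : ‖alf x‖ = 1 := by
  rw [Complex.norm_def, normSq_alf hx, Real.sqrt_one]

/-- the coefficients of the product series -/
noncomputable def cc (x : ℝ) (n : ℕ) : ℂ :=
  ∑ k ∈ range (n+1), bc k * bc (n-k) * (alf x)^k * ((starRingEnd ℂ) (alf x))^(n-k)

lemma norm_cc_le (hx : |x| ≤ 1) (n : ℕ) : ‖cc x n‖ ≤ n + 1 := by
  rw [cc]
  calc ‖∑ k ∈ range (n+1), bc k * bc (n-k) * (alf x)^k * ((starRingEnd ℂ) (alf x))^(n-k)‖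
      ≤ ∑ k ∈ range (n+1), ‖bc k * bc (n-k) * (alf x)^k * ((starRingEnd ℂ) (alf x))^(n-k)‖ :=
        norm_sum_le _ _
    _ ≤ ∑ _k ∈ range (n+1), (1:ℝ) := by
        apply Finset.sum_le_sum
        intro k hk
        rw [norm_mul, norm_mul, norm_mul, norm_pow, norm_pow, norm_alf hx,
          RCLike.norm_conj, norm_alf hx]
        simp only [one_pow, mul_one]
        calc ‖bc k‖ * ‖bc (n-k)‖ ≤ 1 * 1 :=
              mul_le_mul (bc_norm_le_one k) (bc_norm_le_one (n-k)) (norm_nonneg _) zero_le_one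
          _ = 1 := by norm_num
    _ = n + 1 := by simp
    
lemma Qpos {t : ℝ} (hx : |x| ≤ 1) (ht : |t| < 1) : 0 < 1 - 2*x*t + t^2 := by
  obtain ⟨h1, h2⟩ := abs_lt.mp ht
  obtain ⟨h3, h4⟩ := abs_le.mp hx
  rcases le_or_gt 0 t with h | h
  · have key : (0:ℝ) < (1 - t)^2 := pow_pos (by linarith) 2
    nlinarith
  · have key : (0:ℝ) < (1 + t)^2 := pow_pos (by linarith) 2
    nlinarith

/-- full-range complex expansion -/
lemma hasSum_cc {t : ℝ} (hx : |x| ≤ 1) (ht : |t| < 1) :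
    HasSum (fun n => cc x n * (t : ℂ) ^ n)
      ((((1 - 2*x*t + t^2) ^ (-(1/2) : ℝ) : ℝ)) : ℂ) := by
  set α : ℂ := alf x with hα
  have hnα : ‖α‖ = 1 := norm_alf hx
  have hz1 : ‖α * t‖ < 1 := by
    rw [norm_mul, hnα, one_mul, Complex.norm_real, Real.norm_eq_abs]; exact ht
  have hz2 : ‖(starRingEnd ℂ) α * t‖ < 1 := by
    rw [norm_mul, RCLike.norm_conj, hnα, one_mul, Complex.norm_real, Real.norm_eq_abs]; exact ht
  have hS1 := hasSum_binom hz1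
  have hS2 := hasSum_binom hz2
  have hsn1 := summable_bc_norm hz1
  have hsn2 := summable_bc_norm hz2
  have hcauchy := hasSum_sum_range_mul_of_summable_norm hsn1 hsn2
  rw [hS1.tsum_eq, hS2.tsum_eq] at hcauchy
  -- rewrite the inner sums
  have hinner : ∀ n : ℕ, ∑ k ∈ range (n+1),
      (bc k * (α * t)^k) * (bc (n-k) * ((starRingEnd ℂ) α * t)^(n-k))
      = cc x n * (t : ℂ)^n := by
    intro n
    rw [cc, Finset.sum_mul]
    refine Finset.sum_congr rfl fun k hk => ?_
    have hk' : k ≤ n := by have := Finset.mem_range.mp hk; omega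
    rw [mul_pow, mul_pow]
    have : ((t : ℂ))^k * ((t : ℂ))^(n-k) = ((t : ℂ))^n := by
      rw [← pow_add]; congr 1; omega
    rw [← this]
    ring
  simp_rw [hinner] at hcauchy
  -- now identify the value
  set W : ℂ := 1 - α * t with hW
  have hWre : W.re = 1 - x * t := by
    simp [hW, hα, alf]
  have hWim : W.im = -(Real.sqrt (1 - x^2) * t) := by
    simp [hW, hα, alf]
  have hWrepos : 0 < W.re := by
    rw [hWre]
    have h1 : |x * t| < 1 := by
      rw [abs_mul]
      calc |x| * |t| ≤ 1 * |t| := mul_le_mul_of_nonneg_right hx (abs_nonneg t)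
        _ = |t| := one_mul _
        _ < 1 := ht
    have := abs_lt.mp h1
    linarith [this.2]
  have hWne : W ≠ 0 := by
    intro h
    rw [h] at hWrepos
    simp at hWrepos
  have hWarg : W.arg ≠ Real.pi := by
    intro h
    have := Complex.arg_eq_pi_iff.mp h
    linarith [this.1]
  have hconjW : 1 - (starRingEnd ℂ) α * t = (starRingEnd ℂ) W := by
    rw [hW]
    simp [map_sub, map_mul, Complex.conj_ofReal]
  have hexp : (starRingEnd ℂ) (-(1/2) : ℂ) = (-(1/2) : ℂ) := by
    rw [map_neg, map_div₀, map_one, map_ofNat]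
  have hval : (1 - α * t) ^ (-(1/2) : ℂ) * (1 - (starRingEnd ℂ) α * t) ^ (-(1/2) : ℂ)
      = (((1 - 2*x*t + t^2) ^ (-(1/2) : ℝ) : ℝ) : ℂ) := by
    rw [← hW, hconjW]
    rw [Complex.conj_cpow _ _ hWarg, hexp]
    rw [Complex.mul_conj]
    -- now: normSq (W ^ (-(1/2))) = (1-2xt+t²)^(-1/2)
    have habs : ‖W ^ (-(1/2) : ℂ)‖ = ‖W‖ ^ ((-(1/2)) : ℝ) := by
      rw [Complex.norm_cpow_of_ne_zero hWne]
      simp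
    have hnormSqW : Complex.normSq W = 1 - 2*x*t + t^2 := by
      rw [Complex.normSq_apply, hWre, hWim]
      have := sq_sqrt' hx
      nlinarith [this]
    have hQ : 0 < 1 - 2*x*t + t^2 := Qpos hx ht
    have habsW : ‖W‖ = (1 - 2*x*t + t^2) ^ ((1:ℝ)/2) := by
      rw [Complex.norm_def, hnormSqW, Real.sqrt_eq_rpow]
    rw [Complex.normSq_eq_norm_sq, habs, habsW,
      ← Real.rpow_natCast ((((1 - 2*x*t + t^2) ^ ((1:ℝ)/2)) ^ ((-(1/2)):ℝ))) 2,
      ← Real.rpow_mul (Real.rpow_nonneg hQ.le _), ← Real.rpow_mul hQ.le]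
    norm_num
  rw [hval] at hcauchy
  exact hcauchy

include hx in
theorem legendre_generating_function' (t : ℝ) (ht : |t| < 1) :
    HasSum (fun n : ℕ => legendreP n x * t ^ n)
      ((1 - 2 * x * t + t ^ 2) ^ (-(1 / 2) : ℝ)) := by
  -- identify cc with legendreP
  have hid : ∀ n, cc x n = ((legendreP n x : ℝ) : ℂ) := by
    have hd : ∀ n, cc x n - ((legendreP n x : ℝ) : ℂ) = 0 := by
      apply coeff_unique (C := 4) (M := 4) (ε := 1/8) (by norm_num) (by norm_num) (by norm_num)
      · intro n
        have h1 : ‖cc x n‖ ≤ n + 1 := norm_cc_le hx n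
        have h2 : ‖((legendreP n x : ℝ) : ℂ)‖ ≤ 4 ^ n := by
          rw [Complex.norm_real, Real.norm_eq_abs]
          exact abs_legendreP_le n hx
        have h3 : (n : ℝ) + 1 ≤ 2 * 4 ^ n := by
          have : (n : ℝ) + 1 ≤ 2 ^ (n+1) := by
            exact_mod_cast le_of_lt (Nat.lt_two_pow_self (n := n+1))
          calc (n : ℝ) + 1 ≤ 2 ^ (n+1) := this
            _ = 2 * 2 ^ n := by ring
            _ ≤ 2 * 4 ^ n := by
                have : (2:ℝ)^n ≤ 4^n := pow_le_pow_left₀ (by norm_num) (by norm_num) n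
                linarith
        calc ‖cc x n - ((legendreP n x : ℝ) : ℂ)‖
            ≤ ‖cc x n‖ + ‖((legendreP n x : ℝ) : ℂ)‖ := norm_sub_le _ _
          _ ≤ ((n:ℝ) + 1) + 4 ^ n := by exact add_le_add h1 h2
          _ ≤ 2 * 4 ^ n + 4 ^ n := by linarith
          _ ≤ 4 * 4 ^ n := by nlinarith [pow_pos (by norm_num : (0:ℝ) < 4) n]
      · intro τ hτ
        have hτ1 : |τ| < 1 := lt_trans hτ (by norm_num)
        have hcc := hasSum_cc hx hτ1
        have hsm := hasSum_small hx hτ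
        have heq : (1 - (2*x*τ - τ^2)) = 1 - 2*x*τ + τ^2 := by ring
        rw [heq] at hsm
        have hsmC : HasSum (fun n => ((legendreP n x : ℝ) : ℂ) * (τ : ℂ)^n)
            ((((1 - 2*x*τ + τ^2) ^ (-(1/2) : ℝ) : ℝ)) : ℂ) := by
          have := Complex.hasSum_ofReal.mpr hsm
          convert this using 2 with n
          push_cast
          ring
        have := hcc.sub hsmC
        simp only [sub_self] at this
        convert this using 2 with n
        · rfl
        · ring
    intro n
    exact sub_eq_zero.mp (hd n)
  have hcc := hasSum_cc hx ht
  have hfinal : HasSum (fun n => ((legendreP n x * t ^ n : ℝ) : ℂ))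
      ((((1 - 2*x*t + t^2) ^ (-(1/2) : ℝ) : ℝ)) : ℂ) := by
    convert hcc using 2 with n
    rw [hid n]
    push_cast
    ring
  exact Complex.hasSum_ofReal.mp hfinal

end main

/-- **Generating function of the Legendre polynomials.** For `|x| ≤ 1` and `|t| < 1`,
`∑ₙ Pₙ(x) tⁿ` converges to `(1 - 2xt + t²)^{-1/2}`. -/
theorem legendre_generating_function (x t : ℝ) (hx : |x| ≤ 1) (ht : |t| < 1) :
    HasSum (fun n : ℕ => legendreP n x * t ^ n)
      ((1 - 2 * x * t + t ^ 2) ^ (-(1 / 2) : ℝ)) :=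
  legendre_generating_function' hx t ht
end
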